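/- Let C ⊂ ℝ^n be a pointed polyhedral cone of dimension d and ℓ a linear functional whose zero set contains no ray of C. Then there exist faces F₁, F₂ of C with ℓ ≥ 0 on F₁ and ℓ ≤ 0 on F₂ such that dim F₁ + dim F₂ ≥ d. Equivalently, for any convex polytope P with ℓ nonconstant on edges, and any vertex v of P, dim F^+(v) + dim F^-(v) ≥ dim P. -/

import Mathlib

open Set

variable {V : Type*} [NormedAddCommGroup V] [NormedSpace ℝ V]

/-- A (nonempty) convex polytope: the convex hull of a nonempty finite set of points. -/
def IsPolytope (P : Set V) : Prop :=
  ∃ s : Finset V, s.Nonempty ∧ P = convexHull ℝ (s : Set V)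

/-- A (nonempty exposed) face of a polytope. -/
def IsFace (P F : Set V) : Prop :=
  F.Nonempty ∧ IsExposed ℝ P F

/-- A vertex of a polytope: a point whose singleton is a face. -/
def IsVertex (P : Set V) (v : V) : Prop := IsFace P {v}

/-- An edge of a polytope: a face which is a nondegenerate segment. -/
def IsEdge (P : Set V) (v w : V) : Prop := v ≠ w ∧ IsFace P (segment ℝ v w)

/-- `ℓ` attains its maximum on `G` at `v`. -/
def MaxAt (ℓ : V →L[ℝ] ℝ) (G : Set V) (v : V) : Prop := v ∈ G ∧ ∀ x ∈ G, ℓ x ≤ ℓ v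

/-- `ℓ` attains its minimum on `G` at `v`. -/
def MinAt (ℓ : V →L[ℝ] ℝ) (G : Set V) (v : V) : Prop := v ∈ G ∧ ∀ x ∈ G, ℓ v ≤ ℓ x

/-- `ℓ` is nonconstant on every edge of `P`. -/
def NonconstOnEdges (P : Set V) (ℓ : V →L[ℝ] ℝ) : Prop :=
  ∀ v w, IsEdge P v w → ℓ v ≠ ℓ w

/-- Directed edge: an edge oriented by increasing `ℓ`. -/
def DirEdge (P : Set V) (ℓ : V →L[ℝ] ℝ) (v w : V) : Prop := IsEdge P v w ∧ ℓ v < ℓ w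

/-- The witness relation `O(v,w)`: some face of `P` has ℓ-minimum at `v` and
ℓ-maximum at `w`. -/
def ORel (P : Set V) (ℓ : V →L[ℝ] ℝ) (v w : V) : Prop :=
  ∃ G, IsFace P G ∧ MinAt ℓ G v ∧ MaxAt ℓ G w

/-- `O⁻(v)`: the union of relative interiors of faces of `P` on which `ℓ` attains
its maximum at `v`. -/
def Oneg (P : Set V) (ℓ : V →L[ℝ] ℝ) (v : V) : Set V :=
  ⋃ G ∈ {G : Set V | IsFace P G ∧ MaxAt ℓ G v}, intrinsicInterior ℝ G

/-- `O⁺(v)`: the union of relative interiors of faces of `P` on which `ℓ` attains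
its minimum at `v`. -/
def Opos (P : Set V) (ℓ : V →L[ℝ] ℝ) (v : V) : Set V :=
  ⋃ G ∈ {G : Set V | IsFace P G ∧ MinAt ℓ G v}, intrinsicInterior ℝ G

/-- `F⁻(v)`: the closure of `O⁻(v)`. -/
def Fneg (P : Set V) (ℓ : V →L[ℝ] ℝ) (v : V) : Set V := closure (Oneg P ℓ v)

/-- `F⁺(v)`: the closure of `O⁺(v)`. -/
def Fpos (P : Set V) (ℓ : V →L[ℝ] ℝ) (v : V) : Set V := closure (Opos P ℓ v)

/-- The partition `O⁻` is a stratification. -/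
def StratNeg (P : Set V) (ℓ : V →L[ℝ] ℝ) : Prop :=
  ∀ u w : V, IsVertex P u → IsVertex P w →
    (Oneg P ℓ u ∩ Fneg P ℓ w).Nonempty → Oneg P ℓ u ⊆ Fneg P ℓ w

/-- The dimension of a subset of `V` (dimension of its affine span). -/
noncomputable def dimS (F : Set V) : ℕ := Module.finrank ℝ (vectorSpan ℝ F)

/-- The dimension of `F⁻(v)`: the maximal dimension of a face of `P` with
ℓ-maximum at `v`. -/
noncomputable def dimFneg (P : Set V) (ℓ : V →L[ℝ] ℝ) (v : V) : ℕ :=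
  sSup {d : ℕ | ∃ G, IsFace P G ∧ MaxAt ℓ G v ∧ dimS G = d}

/-- The dimension of `F⁺(v)`: the maximal dimension of a face of `P` with
ℓ-minimum at `v`. -/
noncomputable def dimFpos (P : Set V) (ℓ : V →L[ℝ] ℝ) (v : V) : ℕ :=
  sSup {d : ℕ | ∃ G, IsFace P G ∧ MinAt ℓ G v ∧ dimS G = d}

namespace Stmt13Aux

variable {V : Type*} [NormedAddCommGroup V] [NormedSpace ℝ V]

/-- Feasibility of a dual functional: `g` and `g + ℓ` are nonnegative on `s - v`. -/
def Feas (s : Finset V) (v : V) (ℓ g : V →L[ℝ] ℝ) : Prop :=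
  ∀ w ∈ s, 0 ≤ g (w - v) ∧ 0 ≤ g (w - v) + ℓ (w - v)

/-- Vectors of constraints of the first family that are tight at `g`. -/
def SA (s : Finset V) (v : V) (g : V →L[ℝ] ℝ) : Set V :=
  {u | ∃ w ∈ s, u = w - v ∧ g (w - v) = 0}

/-- Vectors of constraints of the second family that are tight at `g`. -/
def SB (s : Finset V) (v : V) (ℓ g : V →L[ℝ] ℝ) : Set V :=
  {u | ∃ w ∈ s, u = w - v ∧ g (w - v) + ℓ (w - v) = 0}

/-- Span of all tight constraint vectors. -/
noncomputable def Usp (s : Finset V) (v : V) (ℓ g : V →L[ℝ] ℝ) : Submodule ℝ V :=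
  Submodule.span ℝ (SA s v g ∪ SB s v ℓ g)

/-- Span of all constraint vectors. -/
noncomputable def Wsp (s : Finset V) (v : V) : Submodule ℝ V :=
  Submodule.span ℝ ((fun w => w - v) '' (s : Set V))

lemma fd_Wsp (s : Finset V) (v : V) : FiniteDimensional ℝ (Wsp s v) :=
  FiniteDimensional.span_of_finite ℝ (s.finite_toSet.image _)

lemma usp_le_wsp (s : Finset V) (v : V) (ℓ g : V →L[ℝ] ℝ) : Usp s v ℓ g ≤ Wsp s v := by
  apply Submodule.span_le.mpr
  rintro u (⟨w, hw, rfl, -⟩ | ⟨w, hw, rfl, -⟩) <;>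
    exact Submodule.subset_span ⟨w, hw, rfl⟩

lemma fd_usp (s : Finset V) (v : V) (ℓ g : V →L[ℝ] ℝ) : FiniteDimensional ℝ (Usp s v ℓ g) :=
  haveI := fd_Wsp s v
  Submodule.finiteDimensional_of_le (usp_le_wsp s v ℓ g)

/-- The key elementary real inequality for the line-search step. -/
lemma hreal (a q t r : ℝ) (ha : 0 < a) (hq : q ≠ 0) (hr : a + r * q = 0)
    (hrt : r ≤ 0 → r ≤ t) (ht : t ≤ 0) : 0 ≤ a + t * q := by
  rcases lt_trichotomy r 0 with h | h | h
  · have hrt' := hrt h.le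
    have hqpos : 0 < q := by
      rcases lt_trichotomy q 0 with hq' | hq' | hq'
      · nlinarith
      · exact absurd hq' hq
      · exact hq'
    nlinarith [mul_le_mul_of_nonneg_right hrt' hqpos.le]
  · subst h; simp at hr; linarith
  · have hqneg : q < 0 := by
      rcases lt_trichotomy q 0 with hq' | hq' | hq'
      · exact hq'
      · exact absurd hq' hq
      · nlinarith
    nlinarith [mul_nonneg (neg_nonneg.mpr ht) (neg_nonneg.mpr hqneg.le)]


lemma root_val (a q : ℝ) (hq : q ≠ 0) : a + -a / q * q = 0 := by field_simp; ring

lemma root_eq (a q t : ℝ) (hq : q ≠ 0) (h : a + t * q = 0) : t = -a / q := by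
  field_simp
  linarith

/-- The improvement step: if some constraint vector is not in the span of tight
constraints, we can move to a feasible point with strictly larger tight span. -/
lemma improve (s : Finset V) (v : V) (ℓ g : V →L[ℝ] ℝ) (hg : Feas s v ℓ g)
    (wb : V) (hwb : wb ∈ s) (hnot : wb - v ∉ Usp s v ℓ g) :
    ∃ g', Feas s v ℓ g' ∧
      Module.finrank ℝ (Usp s v ℓ g) < Module.finrank ℝ (Usp s v ℓ g') := by
  haveI := fd_Wsp s v
  haveI := fd_usp s v ℓ g
  have hclosed : IsClosed ((Usp s v ℓ g : Submodule ℝ V) : Set V) :=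
    Submodule.closed_of_finiteDimensional _
  obtain ⟨f, u, hfu, hux⟩ :=
    geometric_hahn_banach_closed_point (Usp s v ℓ g).convex hclosed hnot
  have hu0 : 0 < u := by simpa using hfu 0 (Submodule.zero_mem _)
  have hU0 : ∀ a ∈ Usp s v ℓ g, f a = 0 := by
    intro a ha
    by_contra h0
    have h1 := hfu (((u + 1) / f a) • a) (Submodule.smul_mem _ _ ha)
    rw [map_smul, smul_eq_mul, div_mul_cancel₀ _ h0] at h1
    linarith
  have hfx : 0 < f (wb - v) := hu0.trans hux
  set ψ : V →L[ℝ] ℝ := (f (wb - v))⁻¹ • f with hψ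
  have hψx : ψ (wb - v) = 1 := by
    rw [hψ]
    simp only [ContinuousLinearMap.smul_apply, smul_eq_mul]
    exact inv_mul_cancel₀ hfx.ne' 
  have hψU : ∀ a ∈ Usp s v ℓ g, ψ a = 0 := by
    intro a ha; simp [hψ, hU0 a ha]
  have hψtight : ∀ w ∈ s, (g (w - v) = 0 ∨ g (w - v) + ℓ (w - v) = 0) → ψ (w - v) = 0 := by
    intro w hw ht
    refine hψU _ (Submodule.subset_span ?_)
    rcases ht with h | h
    · exact Or.inl ⟨w, hw, rfl, h⟩
    · exact Or.inr ⟨w, hw, rfl, h⟩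
  -- the set of nonpositive roots
  set R : Set ℝ := {t | t ≤ 0 ∧ ∃ w ∈ s, ψ (w - v) ≠ 0 ∧
      (g (w - v) + t * ψ (w - v) = 0 ∨ g (w - v) + ℓ (w - v) + t * ψ (w - v) = 0)} with hR
  have hRfin : R.Finite := by
    apply Set.Finite.subset (Set.Finite.union
      (s.finite_toSet.image (fun w => -(g (w - v)) / ψ (w - v)))
      (s.finite_toSet.image (fun w => -(g (w - v) + ℓ (w - v)) / ψ (w - v))))
    rintro t ⟨-, w, hw, hq, hcase | hcase⟩
    · exact Or.inl ⟨w, hw, (root_eq _ _ _ hq hcase).symm⟩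
    · exact Or.inr ⟨w, hw, (root_eq _ _ _ hq hcase).symm⟩
  have hmemR : -(g (wb - v)) ∈ R := by
    refine ⟨neg_nonpos.mpr (hg wb hwb).1, wb, hwb, by rw [hψx]; exact one_ne_zero, Or.inl ?_⟩
    rw [hψx]; ring
  have hRne : hRfin.toFinset.Nonempty := ⟨_, hRfin.mem_toFinset.mpr hmemR⟩
  set ts : ℝ := hRfin.toFinset.max' hRne with hts
  have htsmem : ts ∈ R := hRfin.mem_toFinset.mp (hRfin.toFinset.max'_mem hRne)
  have htsle : ∀ r ∈ R, r ≤ ts := fun r hr =>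
    hRfin.toFinset.le_max' r (hRfin.mem_toFinset.mpr hr)
  have hts0 : ts ≤ 0 := htsmem.1
  set g' : V →L[ℝ] ℝ := g + ts • ψ with hg'
  have happ : ∀ u : V, g' u = g u + ts * ψ u := by
    intro u; simp [hg']
  -- feasibility of g'
  have hfeas' : Feas s v ℓ g' := by
    intro w hw
    rcases eq_or_ne (ψ (w - v)) 0 with hq | hq
    · constructor
      · rw [happ, hq]
        linarith [(hg w hw).1]
      · rw [happ, hq]
        linarith [(hg w hw).2]
    · have ha : 0 < g (w - v) := by
        rcases lt_or_eq_of_le (hg w hw).1 with h | h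
        · exact h
        · exact absurd (hψtight w hw (Or.inl h.symm)) hq
      have hb : 0 < g (w - v) + ℓ (w - v) := by
        rcases lt_or_eq_of_le (hg w hw).2 with h | h
        · exact h
        · exact absurd (hψtight w hw (Or.inr h.symm)) hq
      constructor
      · rw [happ]
        refine hreal _ _ _ (-g (w - v) / ψ (w - v)) ha hq (root_val _ _ hq) ?_ hts0
        intro hr0
        exact htsle _ ⟨hr0, w, hw, hq, Or.inl (root_val _ _ hq)⟩
      · have heq : g' (w - v) + ℓ (w - v) = g (w - v) + ℓ (w - v) + ts * ψ (w - v) := by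
          rw [happ]; ring
        rw [heq]
        refine hreal _ _ _ (-(g (w - v) + ℓ (w - v)) / ψ (w - v)) hb hq (root_val _ _ hq) ?_ hts0
        intro hr0
        exact htsle _ ⟨hr0, w, hw, hq, Or.inr (root_val _ _ hq)⟩
  -- old tight constraints stay tight
  have hmono : Usp s v ℓ g ≤ Usp s v ℓ g' := by
    apply Submodule.span_le.mpr
    rintro x (⟨w, hw, rfl, htight⟩ | ⟨w, hw, rfl, htight⟩)
    · refine Submodule.subset_span (Or.inl ⟨w, hw, rfl, ?_⟩)
      rw [happ, hψtight w hw (Or.inl htight), htight]; ring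
    · refine Submodule.subset_span (Or.inr ⟨w, hw, rfl, ?_⟩)
      rw [happ, hψtight w hw (Or.inr htight)]; linarith [htight]
  -- a new tight constraint appears
  obtain ⟨-, wo, hwo, hqo, hco⟩ := htsmem
  have hnew : wo - v ∈ Usp s v ℓ g' := by
    refine Submodule.subset_span ?_
    rcases hco with h | h
    · exact Or.inl ⟨wo, hwo, rfl, by rw [happ]; linarith⟩
    · exact Or.inr ⟨wo, hwo, rfl, by rw [happ]; linarith⟩
  have hnotold : wo - v ∉ Usp s v ℓ g := fun hmem => hqo (hψU _ hmem)
  have hlt : Usp s v ℓ g < Usp s v ℓ g' :=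
    lt_of_le_of_ne hmono (fun he => hnotold (he ▸ hnew))
  haveI := fd_usp s v ℓ g'
  exact ⟨g', hfeas', Submodule.finrank_lt_finrank_of_lt hlt⟩

/-- Existence of a feasible functional, given an exposing functional for `v`. -/
lemma exists_feas (s : Finset V) (v : V) (hv : v ∈ s) (ℓ f : V →L[ℝ] ℝ)
    (hf : ∀ w ∈ s, w ≠ v → f w < f v) : ∃ g, Feas s v ℓ g := by
  classical
  have hT : ∃ t : ℝ, 0 ≤ t ∧ ∀ w ∈ s, -ℓ (w - v) / (f v - f w) ≤ t := by
    refine ⟨max (s.sup' ⟨v, hv⟩ fun w => -ℓ (w - v) / (f v - f w)) 0, le_max_right _ _, ?_⟩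
    intro w hw
    exact le_trans (Finset.le_sup' (fun w => -ℓ (w - v) / (f v - f w)) hw) (le_max_left _ _)
  obtain ⟨t, ht0, htall⟩ := hT
  refine ⟨t • (-f), ?_⟩
  intro w hw
  rcases eq_or_ne w v with rfl | hne
  · simp
  · have hc : 0 < f v - f w := sub_pos.mpr (hf w hw hne)
    have happ : (t • (-f)) (w - v) = t * (f v - f w) := by
      simp [map_sub]; ring
    constructor
    · rw [happ]
      exact mul_nonneg ht0 hc.le
    · rw [happ]
      have h3 : -ℓ (w - v) / (f v - f w) ≤ t := htall w hw
      have := (div_le_iff₀ hc).mp h3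
      linarith

/-- Main construction: a feasible functional whose tight constraints span everything. -/
lemma exists_good (s : Finset V) (v : V) (hv : v ∈ s) (ℓ f : V →L[ℝ] ℝ)
    (hf : ∀ w ∈ s, w ≠ v → f w < f v) :
    ∃ g, Feas s v ℓ g ∧ ∀ w ∈ s, w - v ∈ Usp s v ℓ g := by
  haveI := fd_Wsp s v
  set D : Set ℕ := {n | ∃ g, Feas s v ℓ g ∧ n = Module.finrank ℝ (Usp s v ℓ g)} with hD
  have hDne : D.Nonempty := by
    obtain ⟨g, hg⟩ := exists_feas s v hv ℓ f hf
    exact ⟨_, g, hg, rfl⟩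
  have hDbdd : BddAbove D := by
    refine ⟨Module.finrank ℝ (Wsp s v), ?_⟩
    rintro n ⟨g, -, rfl⟩
    exact Submodule.finrank_mono (usp_le_wsp s v ℓ g)
  obtain ⟨g₀, hfeas, hn⟩ := Nat.sSup_mem hDne hDbdd
  refine ⟨g₀, hfeas, ?_⟩
  intro w hw
  by_contra hnot
  obtain ⟨g', hf', hlt⟩ := improve s v ℓ g₀ hfeas w hw hnot
  have hmem : Module.finrank ℝ (Usp s v ℓ g') ∈ D := ⟨g', hf', rfl⟩
  have := le_csSup hDbdd hmem
  omega

/-- Nonnegativity extends from the finite set to the hull. -/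
lemma nonneg_hull (s : Finset V) (v : V) (g : V →L[ℝ] ℝ)
    (h : ∀ w ∈ s, 0 ≤ g (w - v)) :
    ∀ y ∈ convexHull ℝ (s : Set V), 0 ≤ g (y - v) := by
  intro y hy
  have hsub : (s : Set V) ⊆ {y : V | 0 ≤ g (y - v)} := fun w hw => h w hw
  have hcv : Convex ℝ {y : V | 0 ≤ g (y - v)} := by
    intro x hx z hz a b ha hb hab
    simp only [mem_setOf_eq] at *
    have h2 : a • x + b • z - v = a • (x - v) + b • (z - v) + (a + b - 1) • v := by module
    have h3 : g (a • x + b • z - v) = a * g (x - v) + b * g (z - v) := by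
      rw [h2, hab]
      simp [map_add, map_smul]
    rw [h3]
    exact add_nonneg (mul_nonneg ha hx) (mul_nonneg hb hz)
  exact convexHull_min hsub hcv hy

end Stmt13Aux

/-- For any convex polytope `P` with `ℓ` nonconstant on edges and
any vertex `v`, `dim F⁺(v) + dim F⁻(v) ≥ dim P`. -/
theorem stmt13 (P : Set V) (hP : IsPolytope P) (ℓ : V →L[ℝ] ℝ)
    (hℓ : NonconstOnEdges P ℓ) (v : V) (hv : IsVertex P v) :
    dimS P ≤ dimFpos P ℓ v + dimFneg P ℓ v := by
  classical
  obtain ⟨s₀, hs₀, hP0⟩ := hP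
  have hvP : v ∈ P := hv.2.subset rfl
  set s : Finset V := insert v s₀ with hs
  have hvs : v ∈ s := Finset.mem_insert_self v s₀
  have hPs : P = convexHull ℝ (s : Set V) := by
    apply le_antisymm
    · rw [hP0]
      exact convexHull_mono (by exact_mod_cast Finset.coe_subset.mpr (Finset.subset_insert v s₀))
    · apply convexHull_min
      · intro x hx
        rcases Finset.mem_insert.mp (Finset.mem_coe.mp hx) with rfl | hx0
        · exact hvP
        · rw [hP0]
          exact subset_convexHull ℝ _ (Finset.mem_coe.mpr hx0)
      · rw [hP0]
        exact convex_convexHull ℝ _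
  obtain ⟨f, hfv⟩ := hv.2 ⟨v, rfl⟩
  have hvmem : v ∈ {x ∈ P | ∀ y ∈ P, f y ≤ f x} := hfv ▸ rfl
  have hvmax : ∀ y ∈ P, f y ≤ f v := hvmem.2
  have huniq : ∀ x ∈ P, (∀ y ∈ P, f y ≤ f x) → x = v := by
    intro x hx hmax
    have hxv : x ∈ ({v} : Set V) := by rw [hfv]; exact ⟨hx, hmax⟩
    exact hxv
  have hmemP : ∀ w : V, w ∈ s → w ∈ P := by
    intro w hw
    have : w ∈ convexHull ℝ (s : Set V) := subset_convexHull ℝ _ (Finset.mem_coe.mpr hw)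
    rwa [← hPs] at this
  have hfs : ∀ w ∈ s, w ≠ v → f w < f v := by
    intro w hw hne
    refine lt_of_le_of_ne (hvmax w (hmemP w hw)) fun he => hne ?_
    exact huniq w (hmemP w hw) fun y hy => le_trans (hvmax y hy) he.ge
  obtain ⟨g₀, hfeas, hfull⟩ := Stmt13Aux.exists_good s v hvs ℓ f hfs
  have hA : ∀ y ∈ P, 0 ≤ g₀ (y - v) := by
    intro y hy
    exact Stmt13Aux.nonneg_hull s v g₀ (fun w hw => (hfeas w hw).1) y (hPs ▸ hy)
  have hB : ∀ y ∈ P, 0 ≤ g₀ (y - v) + ℓ (y - v) := by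
    intro y hy
    have h := Stmt13Aux.nonneg_hull s v (g₀ + ℓ) (fun w hw => by
      simpa using (hfeas w hw).2) y (hPs ▸ hy)
    simpa using h
  set G₁ : Set V := {x ∈ P | ∀ y ∈ P, (-g₀) y ≤ (-g₀) x} with hG₁
  set G₂ : Set V := {x ∈ P | ∀ y ∈ P, (-(g₀ + ℓ)) y ≤ (-(g₀ + ℓ)) x} with hG₂
  have hG₁iff : ∀ x, x ∈ G₁ ↔ (x ∈ P ∧ g₀ (x - v) = 0) := by
    intro x
    constructor
    · rintro ⟨hxP, hxm⟩
      have h1 := hxm v hvP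
      simp only [ContinuousLinearMap.neg_apply, neg_le_neg_iff] at h1
      have h2 := hA x hxP
      rw [map_sub] at h2 ⊢
      constructor
      · exact hxP
      · linarith
    · rintro ⟨hxP, hx0⟩
      refine ⟨hxP, fun y hy => ?_⟩
      have h1 := hA y hy
      simp only [ContinuousLinearMap.neg_apply, neg_le_neg_iff]
      rw [map_sub] at hx0 h1
      linarith
  have hG₂iff : ∀ x, x ∈ G₂ ↔ (x ∈ P ∧ g₀ (x - v) + ℓ (x - v) = 0) := by
    intro x
    constructor
    · rintro ⟨hxP, hxm⟩
      have h1 := hxm v hvP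
      simp only [ContinuousLinearMap.neg_apply, ContinuousLinearMap.add_apply,
        neg_le_neg_iff] at h1
      have h2 := hB x hxP
      rw [map_sub] at h2 ⊢
      rw [map_sub (f := ℓ)] at h2 ⊢
      constructor
      · exact hxP
      · linarith
    · rintro ⟨hxP, hx0⟩
      refine ⟨hxP, fun y hy => ?_⟩
      have h1 := hB y hy
      simp only [ContinuousLinearMap.neg_apply, ContinuousLinearMap.add_apply,
        neg_le_neg_iff]
      rw [map_sub, map_sub (f := ℓ)] at hx0 h1
      linarith
  have hvG₁ : v ∈ G₁ := (hG₁iff v).mpr ⟨hvP, by simp⟩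
  have hvG₂ : v ∈ G₂ := (hG₂iff v).mpr ⟨hvP, by simp⟩
  have hfaceG₁ : IsFace P G₁ := ⟨⟨v, hvG₁⟩, fun _ => ⟨-g₀, hG₁⟩⟩
  have hfaceG₂ : IsFace P G₂ := ⟨⟨v, hvG₂⟩, fun _ => ⟨-(g₀ + ℓ), hG₂⟩⟩
  have hminG₁ : MinAt ℓ G₁ v := by
    refine ⟨hvG₁, fun x hx => ?_⟩
    obtain ⟨hxP, hx0⟩ := (hG₁iff x).mp hx
    have h2 := hB x hxP
    rw [map_sub] at hx0 h2
    rw [map_sub (f := ℓ)] at h2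
    linarith
  have hmaxG₂ : MaxAt ℓ G₂ v := by
    refine ⟨hvG₂, fun x hx => ?_⟩
    obtain ⟨hxP, hx0⟩ := (hG₂iff x).mp hx
    have h2 := hA x hxP
    rw [map_sub, map_sub (f := ℓ)] at hx0
    rw [map_sub] at h2
    linarith
  -- spans
  set U₁ : Submodule ℝ V := Submodule.span ℝ (Stmt13Aux.SA s v g₀) with hU₁def
  set U₂ : Submodule ℝ V := Submodule.span ℝ (Stmt13Aux.SB s v ℓ g₀) with hU₂def
  haveI hfdW : FiniteDimensional ℝ (Stmt13Aux.Wsp s v) := Stmt13Aux.fd_Wsp s v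
  have hWeq : vectorSpan ℝ P = Stmt13Aux.Wsp s v := by
    rw [hPs, ← direction_affineSpan, affineSpan_convexHull, direction_affineSpan,
      vectorSpan_eq_span_vsub_set_right ℝ (Finset.mem_coe.mpr hvs)]
    rfl
  haveI hfdP : FiniteDimensional ℝ (vectorSpan ℝ P) := by
    rw [hWeq]; exact hfdW
  have hU1le : U₁ ≤ vectorSpan ℝ G₁ := by
    apply Submodule.span_le.mpr
    rintro u ⟨w, hw, rfl, htight⟩
    have hwG₁ : w ∈ G₁ := (hG₁iff w).mpr ⟨hmemP w hw, htight⟩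
    have hmem := vsub_mem_vectorSpan ℝ hwG₁ hvG₁
    simpa [vsub_eq_sub] using hmem
  have hU2le : U₂ ≤ vectorSpan ℝ G₂ := by
    apply Submodule.span_le.mpr
    rintro u ⟨w, hw, rfl, htight⟩
    have hwG₂ : w ∈ G₂ := (hG₂iff w).mpr ⟨hmemP w hw, htight⟩
    have hmem := vsub_mem_vectorSpan ℝ hwG₂ hvG₂
    simpa [vsub_eq_sub] using hmem
  have hWle : Stmt13Aux.Wsp s v ≤ U₁ ⊔ U₂ := by
    apply Submodule.span_le.mpr
    rintro u ⟨w, hw, rfl⟩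
    have hmem := hfull w hw
    rw [Stmt13Aux.Usp, Submodule.span_union] at hmem
    exact hmem
  have hVG₁le : vectorSpan ℝ G₁ ≤ Stmt13Aux.Wsp s v :=
    hWeq ▸ vectorSpan_mono ℝ hfaceG₁.2.subset
  have hVG₂le : vectorSpan ℝ G₂ ≤ Stmt13Aux.Wsp s v :=
    hWeq ▸ vectorSpan_mono ℝ hfaceG₂.2.subset
  haveI hfdVG₁ : FiniteDimensional ℝ (vectorSpan ℝ G₁) :=
    Submodule.finiteDimensional_of_le hVG₁le
  haveI hfdVG₂ : FiniteDimensional ℝ (vectorSpan ℝ G₂) :=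
    Submodule.finiteDimensional_of_le hVG₂le
  haveI hfdU1 : FiniteDimensional ℝ U₁ :=
    Submodule.finiteDimensional_of_le (hU1le.trans hVG₁le)
  haveI hfdU2 : FiniteDimensional ℝ U₂ :=
    Submodule.finiteDimensional_of_le (hU2le.trans hVG₂le)
  haveI hfdU12 : FiniteDimensional ℝ ↥(U₁ ⊔ U₂) :=
    Submodule.finiteDimensional_of_le (sup_le (hU1le.trans hVG₁le) (hU2le.trans hVG₂le))
  -- the rank chain
  have step1 : dimS P ≤ Module.finrank ℝ ↥(U₁ ⊔ U₂) := by
    have : Module.finrank ℝ (vectorSpan ℝ P) = Module.finrank ℝ (Stmt13Aux.Wsp s v) := by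
      rw [hWeq]
    rw [dimS, this]
    exact Submodule.finrank_mono hWle
  have step2 : Module.finrank ℝ ↥(U₁ ⊔ U₂) ≤
      Module.finrank ℝ U₁ + Module.finrank ℝ U₂ := by
    have h := Submodule.finrank_sup_add_finrank_inf_eq U₁ U₂
    omega
  have step3 : Module.finrank ℝ U₁ ≤ dimS G₁ := Submodule.finrank_mono hU1le
  have step4 : Module.finrank ℝ U₂ ≤ dimS G₂ := Submodule.finrank_mono hU2le
  -- each face contributes to the corresponding sSup
  have hbddpos : BddAbove {d : ℕ | ∃ G, IsFace P G ∧ MinAt ℓ G v ∧ dimS G = d} := by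
    refine ⟨dimS P, ?_⟩
    rintro n ⟨G, hface, -, rfl⟩
    have hle : vectorSpan ℝ G ≤ vectorSpan ℝ P := vectorSpan_mono ℝ hface.2.subset
    exact Submodule.finrank_mono hle
  have hbddneg : BddAbove {d : ℕ | ∃ G, IsFace P G ∧ MaxAt ℓ G v ∧ dimS G = d} := by
    refine ⟨dimS P, ?_⟩
    rintro n ⟨G, hface, -, rfl⟩
    have hle : vectorSpan ℝ G ≤ vectorSpan ℝ P := vectorSpan_mono ℝ hface.2.subset
    exact Submodule.finrank_mono hle
  have hpos : dimS G₁ ≤ dimFpos P ℓ v :=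
    le_csSup hbddpos ⟨G₁, hfaceG₁, hminG₁, rfl⟩
  have hneg : dimS G₂ ≤ dimFneg P ℓ v :=
    le_csSup hbddneg ⟨G₂, hfaceG₂, hmaxG₂, rfl⟩
  calc dimS P ≤ Module.finrank ℝ ↥(U₁ ⊔ U₂) := step1
    _ ≤ Module.finrank ℝ U₁ + Module.finrank ℝ U₂ := step2
    _ ≤ dimS G₁ + dimS G₂ := Nat.add_le_add step3 step4
    _ ≤ dimFpos P ℓ v + dimFneg P ℓ v := Nat.add_le_add hpos hneg
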